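/- Let z > 0 and p_max > 0. Set c = min(z·p_max, 1) and ℓ = max(p_max − 1/z, 0), and let μ = c · Uniform([ℓ, p_max]) be the uniform probability measure on the interval [ℓ, p_max] scaled by c (a sub-probability measure of total mass c). Then for every p ≥ 0, μ((p, ∞)) = min(1, max(0, z·(p_max − p))). -/

import Mathlib

open MeasureTheory

/-- The randomized bidding strategy that with probability
`c = min(z·p_max, 1)` bids uniformly on `[ℓ, p_max]`, where
`ℓ = max(p_max − 1/z, 0)`, i.e. the sub-probability measure
`μ = c · Uniform([ℓ, p_max])`, has survival function
`μ((p,∞)) = min(1, max(0, z(p_max − p)))` for every `p ≥ 0`. -/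
theorem scaled_uniform_survival_eq_l2_allocation
    (z pmax : ℝ) (hz : 0 < z) (hpmax : 0 < pmax)
    (c ℓ : ℝ) (hc : c = min (z * pmax) 1) (hℓ : ℓ = max (pmax - 1 / z) 0)
    (μ : Measure ℝ)
    (hμ : μ = ENNReal.ofReal c •
      ((volume (Set.Icc ℓ pmax))⁻¹ • volume.restrict (Set.Icc ℓ pmax))) :
    ∀ p, 0 ≤ p → μ (Set.Ioi p) = ENNReal.ofReal (min 1 (max 0 (z * (pmax - p)))) := by
  intro p hp
  have hzinv : 0 < 1 / z := by positivity
  have hℓ0 : 0 ≤ ℓ := by rw [hℓ]; exact le_max_right _ _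
  have hℓlt : ℓ < pmax := by
    rw [hℓ]
    rcases le_or_gt (pmax - 1 / z) 0 with h | h
    · rw [max_eq_right h]; exact hpmax
    · rw [max_eq_left h.le]; linarith
  have hd : 0 < pmax - ℓ := by linarith
  -- key identity c = z * (pmax - ℓ)
  have hkey : c = z * (pmax - ℓ) := by
    rcases le_total (z * pmax) 1 with h | h
    · have h1 : pmax ≤ 1 / z := by
        rw [le_div_iff₀ hz]; linarith [h, mul_comm z pmax]
      have : ℓ = 0 := by rw [hℓ, max_eq_right]; linarith
      rw [hc, min_eq_left h, this]; ring
    · have h1 : 1 / z ≤ pmax := by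
        rw [div_le_iff₀ hz]; linarith [h, mul_comm z pmax]
      have : ℓ = pmax - 1 / z := by rw [hℓ, max_eq_left]; linarith
      rw [hc, min_eq_right h, this]
      field_simp; ring
  have hc0 : 0 ≤ c := by rw [hkey]; positivity
  have hvol : volume (Set.Icc ℓ pmax) = ENNReal.ofReal (pmax - ℓ) := Real.volume_Icc
  rw [hμ, Measure.smul_apply, Measure.smul_apply, smul_eq_mul, smul_eq_mul,
    Measure.restrict_apply measurableSet_Ioi, hvol,
    ← ENNReal.ofReal_inv_of_pos hd]
  rcases le_or_gt ℓ p with hlp | hlp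
  · -- p ≥ ℓ : intersection is Ioc p pmax
    have hset : Set.Ioi p ∩ Set.Icc ℓ pmax = Set.Ioc p pmax := by
      ext x
      simp only [Set.mem_inter_iff, Set.mem_Ioi, Set.mem_Icc, Set.mem_Ioc]
      constructor
      · rintro ⟨h1, h2, h3⟩; exact ⟨h1, h3⟩
      · rintro ⟨h1, h2⟩; exact ⟨h1, by linarith, h2⟩
    rw [hset, Real.volume_Ioc, ← ENNReal.ofReal_mul (by positivity),
      ← ENNReal.ofReal_mul (by positivity)]
    have hratio : c * ((pmax - ℓ)⁻¹ * (pmax - p)) = z * (pmax - p) := by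
      rw [hkey]; field_simp
    rw [hratio]
    -- RHS simplification: z*(pmax-p) ≤ 1 since p ≥ ℓ ≥ pmax - 1/z
    have hle1 : z * (pmax - p) ≤ 1 := by
      have : pmax - 1 / z ≤ ℓ := by rw [hℓ]; exact le_max_left _ _
      have hpz : pmax - p ≤ 1 / z := by linarith
      calc z * (pmax - p) ≤ z * (1 / z) := by
            exact mul_le_mul_of_nonneg_left hpz hz.le
        _ = 1 := by field_simp
    rw [min_eq_right (max_le zero_le_one hle1)]
    rcases le_total (z * (pmax - p)) 0 with h | h
    · rw [max_eq_left h, ENNReal.ofReal_eq_zero.2 h, ENNReal.ofReal_zero]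
    · rw [max_eq_right h]
  · -- p < ℓ : intersection is Icc ℓ pmax
    have hset : Set.Ioi p ∩ Set.Icc ℓ pmax = Set.Icc ℓ pmax := by
      apply Set.inter_eq_self_of_subset_right
      intro x hx
      exact lt_of_lt_of_le hlp hx.1
    rw [hset, hvol]
    rw [← ENNReal.ofReal_mul (by positivity), ← ENNReal.ofReal_mul hc0]
    have hcc : c * ((pmax - ℓ)⁻¹ * (pmax - ℓ)) = c := by field_simp
    rw [hcc]
    -- here ℓ > 0 so ℓ = pmax - 1/z, hence c = 1 and z*(pmax-p) > 1
    have hℓpos : 0 < ℓ := lt_of_le_of_lt hp hlp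
    have hℓeq : ℓ = pmax - 1 / z := by
      rw [hℓ]
      rw [hℓ] at hℓpos
      rcases max_cases (pmax - 1 / z) 0 with ⟨h1, h2⟩ | ⟨h1, h2⟩
      · exact h1
      · rw [h1] at hℓpos; exact absurd hℓpos (lt_irrefl 0)
    have hc1 : c = 1 := by
      rw [hkey, hℓeq]; field_simp; ring
    have hgt1 : 1 ≤ z * (pmax - p) := by
      have : z * (pmax - ℓ) = 1 := by rw [hℓeq]; field_simp; ring
      nlinarith
    rw [hc1, min_eq_left (le_max_of_le_right hgt1)]
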